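/- Let F be an invertible 3×3 real matrix with polar decomposition F = Q₀U₀ (Q₀ ∈ SO(3), U₀ symmetric positive definite). If FᵀF e₃ = e₃ and FᵀF preserves span{e₁,e₂}, then Q₀ e₃ = F e₃. -/

import Mathlib

open Matrix

/-- Let `F` be invertible with polar decomposition `F = Q₀ U₀` (`Q₀ ∈ SO(3)`,
`U₀` symmetric positive definite). If `FᵀF e₃ = e₃` and `FᵀF` preserves
`span{e₁,e₂}`, then `Q₀ e₃ = F e₃`. -/
theorem stmt_6 (F Q U : Matrix (Fin 3) (Fin 3) ℝ)
    (hF : IsUnit F) (hpolar : F = Q * U)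
    (hQ : Qᵀ * Q = 1) (hdetQ : Q.det = 1) (hU : U.PosDef)
    (he3 : (Fᵀ * F).mulVec (Pi.single 2 1) = Pi.single 2 1)
    (hpres : ∀ i : Fin 3, i ≠ 2 → (Fᵀ * F) i 2 = 0 ∧ (Fᵀ * F) 2 i = 0) :
    Q.mulVec (Pi.single 2 1) = F.mulVec (Pi.single 2 1) := by
  have hUsym : Uᵀ = U := by
    have := hU.isHermitian
    simpa [Matrix.IsHermitian, Matrix.conjTranspose_eq_transpose_of_trivial] using this
  have hFF : Fᵀ * F = U * U := by
    rw [hpolar, Matrix.transpose_mul, Matrix.mul_assoc, ← Matrix.mul_assoc Qᵀ, hQ,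
      Matrix.one_mul, hUsym]
  rw [hFF] at he3
  set v : Fin 3 → ℝ := Pi.single 2 1 with hv
  have key : (U + 1).mulVec (U.mulVec v - v) = 0 := by
    have h1 : U.mulVec (U.mulVec v) = v := by rw [Matrix.mulVec_mulVec, he3]
    rw [Matrix.add_mulVec, Matrix.mulVec_sub, Matrix.mulVec_sub, h1]
    simp [Matrix.one_mulVec]
  have hU1 : (U + 1).PosDef := hU.add_posSemidef Matrix.PosSemidef.one
  have hinj := Matrix.mulVec_injective_iff_isUnit.mpr hU1.isUnit
  have hUv : U.mulVec v = v :=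
    sub_eq_zero.mp (hinj (by simpa [Matrix.mulVec_zero] using key))
  rw [hpolar, ← Matrix.mulVec_mulVec, hUv]
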